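/- Let α ≥ 2 be a natural number and let k = 2α − 2 (so k is even, k ≥ 2 and α = ⌈(k+1)/2⌉ = k/2 + 1). Then for every real number p, δ^{k,α}(p) = (∑_{ℓ=α}^{k} (k choose ℓ) p^ℓ (1−p)^{k−ℓ}) − p + (k choose (α−1)) p^α (1−p)^{α−1}. -/
import Mathlib


/-- The expected relative progress of one Slush round with sample size `k`,
majority threshold `α`, at fraction `p` of parties holding opinion 1. -/
noncomputable def slushDelta (k α : ℕ) (p : ℝ) : ℝ :=
  ∑ ℓ ∈ Finset.Icc α k,
    (k.choose ℓ : ℝ) * (p ^ ℓ * (1 - p) ^ (k - ℓ + 1) - (1 - p) ^ ℓ * p ^ (k - ℓ + 1))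

/-- for `α ≥ 2` and even `k = 2α − 2`,
`δ^{k,α}(p) = (∑_{ℓ=α}^{k} C(k,ℓ) p^ℓ (1−p)^{k−ℓ}) − p + C(k,α−1) p^α (1−p)^{α−1}`. -/
theorem slushDelta_short_form_even (α : ℕ) (hα : 2 ≤ α) (k : ℕ) (hk : k = 2 * α - 2)
    (p : ℝ) :
    slushDelta k α p
      = (∑ ℓ ∈ Finset.Icc α k, (k.choose ℓ : ℝ) * p ^ ℓ * (1 - p) ^ (k - ℓ)) - p
        + (k.choose (α - 1) : ℝ) * p ^ α * (1 - p) ^ (α - 1) := by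
  have hαk : α ≤ k := by omega
  set q := 1 - p with hq
  set S := ∑ ℓ ∈ Finset.Icc α k, (k.choose ℓ : ℝ) * p ^ ℓ * q ^ (k - ℓ) with hS
  set T := ∑ ℓ ∈ Finset.Icc α k, (k.choose ℓ : ℝ) * q ^ ℓ * p ^ (k - ℓ) with hT
  have hδ : slushDelta k α p = q * S - p * T := by
    rw [hS, hT, slushDelta, Finset.mul_sum, Finset.mul_sum, ← Finset.sum_sub_distrib]
    apply Finset.sum_congr rfl
    intro ℓ hℓ
    rw [pow_succ (1 - p) (k - ℓ), pow_succ p (k - ℓ), ← hq]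
    ring
  have hT' : T = ∑ j ∈ Finset.range (α - 1), (k.choose j : ℝ) * p ^ j * q ^ (k - j) := by
    rw [hT]
    apply Finset.sum_nbij' (fun ℓ => k - ℓ) (fun j => k - j)
    · intro ℓ hℓ
      simp only [Finset.mem_Icc] at hℓ
      simp only [Finset.mem_range]
      omega
    · intro j hj
      simp only [Finset.mem_range] at hj
      simp only [Finset.mem_Icc]
      omega
    · intro ℓ hℓ
      simp only [Finset.mem_Icc] at hℓ
      omega
    · intro j hj
      simp only [Finset.mem_range] at hj
      omega
    · intro ℓ hℓ
      simp only [Finset.mem_Icc] at hℓ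
      have h1 : k - (k - ℓ) = ℓ := by omega
      rw [h1, Nat.choose_symm hℓ.2]
      ring
  have hbin : ∑ j ∈ Finset.range (k + 1), (k.choose j : ℝ) * p ^ j * q ^ (k - j) = 1 := by
    have hb := add_pow p q k
    have hpq : p + q = 1 := by rw [hq]; ring
    rw [hpq, one_pow] at hb
    rw [hb]
    apply Finset.sum_congr rfl
    intro j hj
    ring
  have hsplit : ∑ j ∈ Finset.range (k + 1), (k.choose j : ℝ) * p ^ j * q ^ (k - j)
      = (∑ j ∈ Finset.range (α - 1), (k.choose j : ℝ) * p ^ j * q ^ (k - j))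
        + (k.choose (α - 1) : ℝ) * p ^ (α - 1) * q ^ (k - (α - 1)) + S := by
    rw [hS, Finset.range_eq_Ico,
      ← Finset.sum_Ico_consecutive _ (by omega : 0 ≤ α - 1) (by omega : α - 1 ≤ k + 1),
      ← Finset.sum_Ico_consecutive _ (by omega : α - 1 ≤ α) (by omega : α ≤ k + 1),
      ← Finset.range_eq_Ico]
    have h3 : Finset.Ico (α - 1) α = {α - 1} := by
      ext x
      simp only [Finset.mem_Ico, Finset.mem_singleton]
      omega
    have h4 : Finset.Ico α (k + 1) = Finset.Icc α k := Finset.Ico_add_one_right_eq_Icc ..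
    rw [h3, h4, Finset.sum_singleton]
    ring
  have hk1 : k - (α - 1) = α - 1 := by omega
  rw [hk1] at hsplit
  have hTval : T = 1 - S - (k.choose (α - 1) : ℝ) * p ^ (α - 1) * q ^ (α - 1) := by
    rw [hT']
    linarith [hbin, hsplit]
  have hpα : p ^ α = p ^ (α - 1) * p := by
    rw [← pow_succ]
    congr 1
    omega
  rw [hδ, hTval, hpα, hq]
  ring
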